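/- Let $(v_j)$ and $(v_\alpha)$ be two strictly decreasing sequences of functions on a set $X$, both converging pointwise to the same function $v$, and suppose each $v_j$ is continuous, $X$ is compact, and the convergence of $(v_\alpha)$ to $v$ is pointwise with $v_j > v$ everywhere. Then there exist subsequences $(v_{j_a})$ and $(v_{\alpha_b})$ that interleave: $\cdots < v_{\alpha_2} < v_{j_2} < v_{\alpha_1} < v_{j_1}$ pointwise on $X$. -/
import Mathlib


open Filter Topology

/-- Key compactness lemma: a monotone-decreasing sequence of continuous functions
converging pointwise to `v` eventually gets (uniformly) below any continuous `g > v`. -/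
lemma aux_below {X : Type*} [TopologicalSpace X] [CompactSpace X]
    (f : ℕ → X → ℝ) (v g : X → ℝ)
    (hcf : ∀ n, Continuous (f n)) (hmono : ∀ n x, f (n + 1) x ≤ f n x)
    (hlim : ∀ x, Tendsto (fun n => f n x) atTop (𝓝 (v x)))
    (hcg : Continuous g) (hg : ∀ x, v x < g x) :
    ∃ N, ∀ n, N ≤ n → ∀ x, f n x < g x := by
  have hanti : ∀ x, Antitone fun n => f n x := fun x =>
    antitone_nat_of_succ_le fun n => hmono n x
  have hU : ∀ n, IsOpen {x | f n x < g x} := fun n => isOpen_lt (hcf n) hcg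
  have hcover : (Set.univ : Set X) ⊆ ⋃ n, {x | f n x < g x} := by
    intro x _
    have : ∀ᶠ n in atTop, f n x < g x := (hlim x).eventually_lt_const (hg x)
    obtain ⟨n, hn⟩ := this.exists
    exact Set.mem_iUnion.2 ⟨n, hn⟩
  obtain ⟨t, ht⟩ := isCompact_univ.elim_finite_subcover _ hU hcover
  refine ⟨t.sup id, fun n hn x => ?_⟩
  obtain ⟨i, hi, hix⟩ := Set.mem_iUnion₂.1 (ht (Set.mem_univ x))
  have : i ≤ n := le_trans (Finset.le_sup (f := id) hi) hn
  exact lt_of_le_of_lt (hanti x this) hix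

/-- Two strictly decreasing sequences of continuous functions on a compact space,
both converging pointwise to the same limit `v` and staying strictly above `v`,
admit interleaving subsequences `⋯ < vα (b 1) < vj (a 1) < vα (b 0) < vj (a 0)`. -/
theorem stmt_0 {X : Type*} [TopologicalSpace X] [CompactSpace X]
    (vj vα : ℕ → X → ℝ) (v : X → ℝ)
    (hcj : ∀ j, Continuous (vj j)) (hcα : ∀ a, Continuous (vα a))
    (hdecj : ∀ j x, vj (j + 1) x < vj j x)
    (hdecα : ∀ a x, vα (a + 1) x < vα a x)
    (hlimj : ∀ x, Tendsto (fun j => vj j x) atTop (𝓝 (v x)))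
    (hlimα : ∀ x, Tendsto (fun a => vα a x) atTop (𝓝 (v x)))
    (hgtj : ∀ j x, v x < vj j x)
    (hgtα : ∀ a x, v x < vα a x) :
    ∃ a b : ℕ → ℕ, StrictMono a ∧ StrictMono b ∧
      (∀ k x, vα (b k) x < vj (a k) x) ∧
      (∀ k x, vj (a (k + 1)) x < vα (b k) x) := by
  have step : ∀ q : ℕ × ℕ, (∀ x, vα q.2 x < vj q.1 x) →
      ∃ q' : ℕ × ℕ, q.1 < q'.1 ∧ q.2 < q'.2 ∧ (∀ x, vj q'.1 x < vα q.2 x) ∧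
        (∀ x, vα q'.2 x < vj q'.1 x) := by
    intro q hq
    obtain ⟨N1, hN1⟩ := aux_below vj v (vα q.2) hcj (fun n x => (hdecj n x).le) hlimj
      (hcα q.2) (hgtα q.2)
    have ha' : ∀ x, vj (max N1 (q.1 + 1)) x < vα q.2 x :=
      hN1 _ (le_max_left _ _)
    obtain ⟨N2, hN2⟩ := aux_below vα v (vj (max N1 (q.1 + 1))) hcα
      (fun n x => (hdecα n x).le) hlimα (hcj _) (hgtj _)
    exact ⟨(max N1 (q.1 + 1), max N2 (q.2 + 1)),
      lt_of_lt_of_le (Nat.lt_succ_self _) (le_max_right _ _),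
      lt_of_lt_of_le (Nat.lt_succ_self _) (le_max_right _ _),
      ha', hN2 _ (le_max_left _ _)⟩
  obtain ⟨N0, hN0⟩ := aux_below vα v (vj 0) hcα (fun n x => (hdecα n x).le) hlimα
    (hcj 0) (hgtj 0)
  let P : ℕ × ℕ → Prop := fun q => ∀ x, vα q.2 x < vj q.1 x
  let F : {q : ℕ × ℕ // P q} → {q : ℕ × ℕ // P q} := fun s =>
    ⟨(step s.1 s.2).choose, (step s.1 s.2).choose_spec.2.2.2⟩
  let p : ℕ → {q : ℕ × ℕ // P q} := fun k => F^[k] ⟨(0, N0), hN0 N0 le_rfl⟩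
  have hp : ∀ k, p (k + 1) = F (p k) := fun k => Function.iterate_succ_apply' _ _ _
  refine ⟨fun k => (p k).1.1, fun k => (p k).1.2, ?_, ?_, fun k => (p k).2, ?_⟩
  · apply strictMono_nat_of_lt_succ
    intro k
    show (p k).1.1 < (p (k+1)).1.1
    rw [hp k]
    exact (step (p k).1 (p k).2).choose_spec.1
  · apply strictMono_nat_of_lt_succ
    intro k
    show (p k).1.2 < (p (k+1)).1.2
    rw [hp k]
    exact (step (p k).1 (p k).2).choose_spec.2.1
  · intro k x
    show vj (p (k+1)).1.1 x < vα (p k).1.2 x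
    rw [hp k]
    exact (step (p k).1 (p k).2).choose_spec.2.2.1 x
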